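/- Let K be the 2×2 matrix K = [[0,1],[−1,0]]. Let ε, Δt, τ > 0 and β ∈ ℝ, set δ = Δt/ε, λ = Δt/ε², μ = 1 + δ/τ, and define the 2×2 matrices M = (μ I₂ + λβ K)/(μ² + (λβ)²) and R = (β τ² K + ε τ I₂)/(β² τ² + ε²). Then λ M − R = − M R. -/

import Mathlib

/-- With `K = [[0,1],[-1,0]]`, `ε, Δt, τ > 0`, `β ∈ ℝ`, `δ = Δt/ε`,
`λ = Δt/ε²`, `μ = 1 + δ/τ`, `M = (μI₂ + λβK)/(μ² + (λβ)²)` and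
`R = (βτ²K + ετI₂)/(β²τ² + ε²)`, one has `λM − R = −MR`. -/
theorem stmt_13 (ε Δt τ β : ℝ) (hε : 0 < ε) (hΔt : 0 < Δt) (hτ : 0 < τ)
    (K : Matrix (Fin 2) (Fin 2) ℝ) (hK : K = !![0, 1; -1, 0])
    (δ lam μ : ℝ) (hδ : δ = Δt / ε) (hlam : lam = Δt / ε ^ 2) (hμ : μ = 1 + δ / τ)
    (M R : Matrix (Fin 2) (Fin 2) ℝ)
    (hM : M = (μ ^ 2 + (lam * β) ^ 2)⁻¹ •
        (μ • (1 : Matrix (Fin 2) (Fin 2) ℝ) + (lam * β) • K))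
    (hR : R = (β ^ 2 * τ ^ 2 + ε ^ 2)⁻¹ •
        ((β * τ ^ 2) • K + (ε * τ) • (1 : Matrix (Fin 2) (Fin 2) ℝ))) :
    lam • M - R = -(M * R) := by
  have hεne : ε ≠ 0 := ne_of_gt hε
  have hτne : τ ≠ 0 := ne_of_gt hτ
  have hlam0 : 0 < lam := by rw [hlam]; positivity
  have hμ2 : μ = 1 + lam * ε / τ := by
    rw [hμ, hδ, hlam]; field_simp
  clear hμ hδ hlam
  subst hμ2
  have hD1 : (1 + lam * ε / τ) ^ 2 + (lam * β) ^ 2 ≠ 0 := by positivity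
  have hD2 : β ^ 2 * τ ^ 2 + ε ^ 2 ≠ 0 := by positivity
  subst hK hM hR
  ext i j
  fin_cases i <;> fin_cases j <;>
    simp [Matrix.mul_apply, Fin.sum_univ_succ, Matrix.one_apply] <;>
    field_simp <;> ring
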